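/- arXiv:2002.07799 — 2 statements merged into one kernel-verified Lean document; each statement's English description precedes it below -/
import Mathlib

section
/- For a reduced undirected s-t graph G (every vertex and edge on some s-t path), every feedback edge set F of G is a tracking edge set for G. -/
open SimpleGraph

noncomputable def etrackSeq {V : Type} (T : Set (Sym2 V)) (l : List (Sym2 V)) : List (Sym2 V) :=
  l.filter (fun e => @decide (e ∈ T) (Classical.propDecidable _))

/-- `T` is a tracking edge set for `G`: distinct `s`-`t` paths have distinct
sequences of `T`-edges along them. -/
def IsTrackingEdgeSet {V : Type} (G : SimpleGraph V) (s t : V) (T : Set (Sym2 V)) : Prop :=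
  ∀ p q : G.Walk s t, p.IsPath → q.IsPath →
    etrackSeq T p.edges = etrackSeq T q.edges → p = q

/-- `F` is a feedback edge set: deleting the edges of `F` makes `G` acyclic. -/
def IsFES {V : Type} (G : SimpleGraph V) (F : Set (Sym2 V)) : Prop :=
  (G.deleteEdges F).IsAcyclic

/-- Every vertex and every edge of `G` lies on some `s`-`t` path. -/
def Reduced {V : Type} (G : SimpleGraph V) (s t : V) : Prop :=
  (∀ v : V, ∃ p : G.Walk s t, p.IsPath ∧ v ∈ p.support) ∧
  (∀ e ∈ G.edgeSet, ∃ p : G.Walk s t, p.IsPath ∧ e ∈ p.edges)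

namespace TrackAux
open SimpleGraph Finset
variable {V : Type}




lemma mem_support_of_mem_edges' {G : SimpleGraph V} {u w v : V} {e : Sym2 V} (p : G.Walk u w)
    (he : e ∈ p.edges) (hv : v ∈ e) : v ∈ p.support := by
  induction e with
  | _ a b =>
    rcases Sym2.mem_iff.mp hv with rfl | rfl
    · exact p.fst_mem_support_of_mem_edges he
    · exact p.snd_mem_support_of_mem_edges he

lemma first_edge {G : SimpleGraph V} {u w : V} (q : G.Walk u w) (hq : q.IsPath)
    {e : Sym2 V} (he : e ∈ q.edges) (hu : u ∈ e) :
    ∃ (y : V) (h : G.Adj u y) (q' : G.Walk y w), q = Walk.cons h q' ∧ e = s(u, y) := by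
  cases q with
  | nil => simp at he
  | cons h q' =>
    rw [Walk.edges_cons, List.mem_cons] at he
    rcases he with rfl | he
    · exact ⟨_, h, q', rfl, rfl⟩
    · exact absurd (mem_support_of_mem_edges' q' he hu)
        ((Walk.cons_isPath_iff h q').mp hq).2

lemma walk_eq_of_edges_eq {G : SimpleGraph V} {u t : V} (p : G.Walk u t) :
    ∀ q : G.Walk u t, p.IsPath → q.IsPath → (∀ e, e ∈ p.edges ↔ e ∈ q.edges) → p = q := by
  induction p with
  | nil =>
    intro q _ hq hpq
    cases q with
    | nil => rfl
    | cons h q' =>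
      exfalso
      have h2 := (hpq _).mpr (show s(_,_) ∈ (Walk.cons h q').edges from by
        rw [Walk.edges_cons]; exact List.mem_cons_self)
      simp at h2
  | @cons a c t h p' ih =>
    intro q hq' hq hpq
    have h1 : s(a, c) ∈ q.edges := (hpq _).mp (by simp)
    obtain ⟨y, hy, q', rfl, heq⟩ := first_edge q hq h1 (Sym2.mem_mk_left a c)
    obtain rfl : c = y := Sym2.congr_right.mp heq
    have hp'path : p'.IsPath := ((Walk.cons_isPath_iff h p').mp hq').1
    have hq'path : q'.IsPath := ((Walk.cons_isPath_iff hy q').mp hq).1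
    have hnodp : s(a, c) ∉ p'.edges := by
      have := hq'.isTrail.edges_nodup
      rw [Walk.edges_cons] at this
      exact (List.nodup_cons.mp this).1
    have hnodq : s(a, c) ∉ q'.edges := by
      have := hq.isTrail.edges_nodup
      rw [Walk.edges_cons] at this
      exact (List.nodup_cons.mp this).1
    have hedges : ∀ e, e ∈ p'.edges ↔ e ∈ q'.edges := by
      intro e
      constructor
      · intro hep
        have : e ∈ (Walk.cons hy q').edges := (hpq e).mp (by simp [hep])
        rw [Walk.edges_cons, List.mem_cons] at this
        rcases this with rfl | h2
        · exact absurd hep hnodp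
        · exact h2
      · intro heq2
        have : e ∈ (Walk.cons h p').edges := (hpq e).mpr (by simp [heq2])
        rw [Walk.edges_cons, List.mem_cons] at this
        rcases this with rfl | h2
        · exact absurd heq2 hnodq
        · exact h2
    exact congrArg (Walk.cons h) (ih q' hp'path hq'path hedges)






lemma path_nbr_card [Fintype V] [DecidableEq V] {G : SimpleGraph V} {a b : V}
    (W : G.Walk a b) : ∀ v : V, W.IsPath →
    (univ.filter (fun w => s(v, w) ∈ W.edges)).card =
      if v = a then (if a = b then 0 else 1)
      else if v = b then 1 else if v ∈ W.support then 2 else 0 := by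
  induction W with
  | @nil u =>
    intro v _
    by_cases hv : v = u <;> simp [hv]
  | @cons u c d h W' ih =>
    intro v hW
    have hW' : W'.IsPath := ((Walk.cons_isPath_iff h W').mp hW).1
    have haW : u ∉ W'.support := ((Walk.cons_isPath_iff h W').mp hW).2
    have hsplit : (univ.filter (fun w => s(v, w) ∈ (Walk.cons h W').edges))
        = (univ.filter (fun w => s(v, w) = s(u, c))) ∪
          (univ.filter (fun w => s(v, w) ∈ W'.edges)) := by
      ext w
      simp only [Walk.edges_cons, List.mem_cons, mem_union, mem_filter, mem_univ, true_and]
    by_cases hva : v = u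
    · subst hva
      have h1 : (univ.filter (fun w => s(v, w) = s(v, c))) = {c} := by
        ext w
        simp only [mem_filter, mem_univ, true_and, mem_singleton, Sym2.congr_right]
      have h2 : (univ.filter (fun w => s(v, w) ∈ W'.edges)) = ∅ := by
        ext w
        simp only [mem_filter, mem_univ, true_and, notMem_empty, iff_false]
        intro hmem
        exact haW (mem_support_of_mem_edges' W' hmem (Sym2.mem_mk_left v w))
      have hvb : v ≠ d := by
        rintro rfl
        exact haW W'.end_mem_support
      rw [hsplit, h1, h2, union_empty]
      simp [hvb]
    · by_cases hvc : v = c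
      · have hca : ¬ c = u := hvc ▸ hva
        have h1 : (univ.filter (fun w => s(v, w) = s(u, c))) = {u} := by
          ext w
          simp [Sym2.eq_iff, hvc, hca]
        have hdisj : u ∉ (univ.filter (fun w => s(v, w) ∈ W'.edges)) := by
          simp only [mem_filter, mem_univ, true_and]
          intro hmem
          exact haW (mem_support_of_mem_edges' W' hmem (Sym2.mem_mk_right v u))
        rw [hsplit, h1, card_union_of_disjoint (disjoint_singleton_left.mpr hdisj), card_singleton, ih v hW']
        by_cases hcd : c = d
        · have hdu : ¬ d = u := hcd ▸ hca
          simp [hvc, hva, hcd, hdu]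
        · have hvd : ¬ v = d := by rw [hvc]; exact hcd
          have hvsup : v ∈ (Walk.cons h W').support := by
            rw [hvc, Walk.support_cons]
            exact List.mem_cons_of_mem _ W'.start_mem_support
          simp [hvc, hva, hcd, hvd, hvsup, hca]
      · have h1 : (univ.filter (fun w => s(v, w) = s(u, c))) = ∅ := by
          ext w
          simp only [mem_filter, mem_univ, true_and, notMem_empty, iff_false, Sym2.eq_iff]
          rintro (⟨rfl, rfl⟩ | ⟨rfl, rfl⟩)
          · exact hva rfl
          · exact hvc rfl
        rw [hsplit, h1, empty_union, ih v hW']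
        have hsup : v ∈ (Walk.cons h W').support ↔ v ∈ W'.support := by
          rw [Walk.support_cons]
          simp [hva]
        simp [hva, hvc, hsup]





lemma no_edge_of_acyclic_even [Fintype V] [DecidableEq V] (H : SimpleGraph V)
    [DecidableRel H.Adj] (hac : H.IsAcyclic) (heven : ∀ v, Even (H.degree v))
    {a b : V} (hab : H.Adj a b) : False := by
  classical
  have hbr := isAcyclic_iff_forall_edge_isBridge.mp hac (H.mem_edgeSet.mpr hab)
  rw [isBridge_iff] at hbr
  have hnr : ¬ (H.deleteEdges {s(a, b)}).Reachable a b := hbr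
  set H' := H.deleteEdges {s(a, b)} with hH'def
  have hadj' : ∀ v w, H'.Adj v w ↔ H.Adj v w ∧ ¬ s(v, w) = s(a, b) := by
    intro v w
    rw [hH'def, SimpleGraph.deleteEdges_adj]
    simp
  -- degree facts
  have hnfa : H'.neighborFinset a = (H.neighborFinset a).erase b := by
    ext w
    simp only [mem_neighborFinset, hadj', mem_erase, Sym2.congr_right]
    tauto
  have hnfb : H'.neighborFinset b = (H.neighborFinset b).erase a := by
    ext w
    have hbb : b = b := rfl
    have hba : ¬ b = a := hab.ne'
    simp only [mem_neighborFinset, hadj', mem_erase, Sym2.eq_iff]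
    tauto
  have hodd : ∀ v, v = a ∨ v = b → Odd (H'.degree v) := by
    rintro v (rfl | rfl)
    · have hmem : b ∈ H.neighborFinset v := by rwa [mem_neighborFinset]
      have : H'.degree v = H.degree v - 1 := by
        rw [SimpleGraph.degree, hnfa, card_erase_of_mem hmem]
        rfl
      rw [this]
      rcases heven v with ⟨k, hk⟩
      have hpos : 0 < H.degree v := by
        rw [← card_neighborFinset_eq_degree]
        exact card_pos.mpr ⟨b, hmem⟩
      exact ⟨k - 1, by omega⟩
    · have hmem : a ∈ H.neighborFinset v := by
        rw [mem_neighborFinset]; exact hab.symm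
      have : H'.degree v = H.degree v - 1 := by
        rw [SimpleGraph.degree, hnfb, card_erase_of_mem hmem]
        rfl
      rw [this]
      rcases heven v with ⟨k, hk⟩
      have hpos : 0 < H.degree v := by
        rw [← card_neighborFinset_eq_degree]
        exact card_pos.mpr ⟨a, hmem⟩
      exact ⟨k - 1, by omega⟩
  have hdegv : ∀ v, ¬ v = a → ¬ v = b → H'.degree v = H.degree v := by
    intro v hva hvb
    have : H'.neighborFinset v = H.neighborFinset v := by
      ext w
      simp only [mem_neighborFinset, hadj', Sym2.eq_iff]
      constructor
      · exact fun hh => hh.1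
      · intro hadj
        refine ⟨hadj, ?_⟩
        rintro (⟨rfl, _⟩ | ⟨rfl, _⟩)
        · exact hva rfl
        · exact hvb rfl
    rw [SimpleGraph.degree, this, SimpleGraph.degree]
  -- the component of a in H'
  set K : Finset V := univ.filter (fun v => H'.Reachable a v) with hKdef
  have haK : a ∈ K := by
    rw [hKdef, mem_filter]
    exact ⟨mem_univ a, Reachable.refl a⟩
  have hbK : b ∉ K := by
    rw [hKdef, mem_filter]
    rintro ⟨-, hr⟩
    exact hnr hr
  have hclosed : ∀ v w, v ∈ K → H'.Adj v w → w ∈ K := by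
    intro v w hv hadj
    rw [hKdef, mem_filter] at hv ⊢
    exact ⟨mem_univ w, hv.2.trans hadj.reachable⟩
  -- induced graph on K and handshake
  let HK : SimpleGraph {x // x ∈ K} := H'.induce {x | x ∈ K}
  have hdeg_eq : ∀ v : {x // x ∈ K}, HK.degree v = H'.degree ↑v := by
    intro v
    rw [← card_neighborSet_eq_degree, ← card_neighborSet_eq_degree]
    apply Fintype.card_congr
    refine ⟨fun x => ⟨↑x.1, x.2⟩, fun y => ⟨⟨y.1, hclosed ↑v y.1 v.2 y.2⟩, y.2⟩, ?_, ?_⟩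
    · rintro ⟨⟨x, hx⟩, hx2⟩; rfl
    · rintro ⟨y, hy⟩; rfl
  have hhs : Even (∑ v : {x // x ∈ K}, HK.degree v) :=
    ⟨#HK.edgeFinset, by rw [sum_degrees_eq_twice_card_edges]; ring⟩
  have heq : (∑ v : {x // x ∈ K}, HK.degree v) = ∑ v ∈ K, H'.degree v := by
    rw [← Finset.sum_coe_sort K (fun v => H'.degree v)]
    exact Fintype.sum_congr _ _ hdeg_eq
  rw [heq] at hhs
  rw [← Finset.add_sum_erase K _ haK] at hhs
  have herase : Even (∑ v ∈ K.erase a, H'.degree v) := by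
    apply Finset.even_sum
    intro v hv
    rw [mem_erase] at hv
    rw [hdegv v hv.1 (fun hvb => hbK (hvb ▸ hv.2))]
    exact heven v
  have hodda := hodd a (Or.inl rfl)
  rcases hodda with ⟨k, hk⟩
  rcases herase with ⟨m, hm⟩
  rcases hhs with ⟨n, hn⟩
  omega


end TrackAux

theorem stmt11 {V : Type} [Fintype V] (G : SimpleGraph V) (s t : V)
    (hred : Reduced G s t) (F : Set (Sym2 V)) (hF : IsFES G F) :
    IsTrackingEdgeSet G s t F := by
  classical
  intro p q hp hq htr
  by_contra hne
  have hFmem : ∀ f ∈ F, (f ∈ p.edges ↔ f ∈ q.edges) := by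
    intro f hf
    constructor <;> intro hmem
    · have hmf : f ∈ etrackSeq F p.edges :=
        List.mem_filter.mpr ⟨hmem, decide_eq_true hf⟩
      rw [htr] at hmf
      exact (List.mem_filter.mp hmf).1
    · have hmf : f ∈ etrackSeq F q.edges :=
        List.mem_filter.mpr ⟨hmem, decide_eq_true hf⟩
      rw [← htr] at hmf
      exact (List.mem_filter.mp hmf).1
  set D : Set (Sym2 V) :=
    {e | (e ∈ p.edges ∧ e ∉ q.edges) ∨ (e ∈ q.edges ∧ e ∉ p.edges)} with hDdef
  set H : SimpleGraph V := SimpleGraph.fromEdgeSet D with hHdef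
  have hHle : H ≤ G.deleteEdges F := by
    intro a b hab
    rw [hHdef, fromEdgeSet_adj] at hab
    rcases hab with ⟨hD, hne'⟩
    have hGadj : G.Adj a b := by
      rcases hD with ⟨h1, _⟩ | ⟨h1, _⟩
      · exact p.adj_of_mem_edges h1
      · exact q.adj_of_mem_edges h1
    rw [SimpleGraph.deleteEdges_adj]
    refine ⟨hGadj, fun hmemF => ?_⟩
    rcases hD with ⟨h1, h2⟩ | ⟨h1, h2⟩
    · exact h2 ((hFmem _ hmemF).mp h1)
    · exact h2 ((hFmem _ hmemF).mpr h1)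
  have hHac : H.IsAcyclic := by
    intro v c hc
    exact hF (c.mapLe hHle) ((Walk.mapLe_isCycle hHle).mpr hc)
  have heven : ∀ v, Even (H.degree v) := by
    intro v
    set Pf := Finset.univ.filter (fun w => s(v, w) ∈ p.edges) with hPf
    set Qf := Finset.univ.filter (fun w => s(v, w) ∈ q.edges) with hQf
    have hnf : H.neighborFinset v = (Pf \ Qf) ∪ (Qf \ Pf) := by
      ext w
      simp only [mem_neighborFinset, Finset.mem_union, Finset.mem_sdiff, hPf, hQf,
        Finset.mem_filter, Finset.mem_univ, true_and, hHdef, fromEdgeSet_adj, hDdef,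
        Set.mem_setOf_eq]
      constructor
      · rintro ⟨hD, -⟩
        exact hD
      · intro hD
        refine ⟨hD, ?_⟩
        rcases hD with ⟨h1, _⟩ | ⟨h1, _⟩
        · exact (p.adj_of_mem_edges h1).ne
        · exact (q.adj_of_mem_edges h1).ne
    have hPQ : Even (Pf.card + Qf.card) := by
      rw [hPf, hQf, TrackAux.path_nbr_card p v hp, TrackAux.path_nbr_card q v hq]
      split_ifs <;> decide
    have h1 : (Pf \ Qf).card + (Pf ∩ Qf).card = Pf.card :=
      Finset.card_sdiff_add_card_inter _ _
    have h2 : (Qf \ Pf).card + (Qf ∩ Pf).card = Qf.card :=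
      Finset.card_sdiff_add_card_inter _ _
    have h3 : (Qf ∩ Pf).card = (Pf ∩ Qf).card := by rw [Finset.inter_comm]
    have hdeg : H.degree v = (Pf \ Qf).card + (Qf \ Pf).card := by
      rw [← card_neighborFinset_eq_degree, hnf,
        Finset.card_union_of_disjoint disjoint_sdiff_sdiff]
    rcases hPQ with ⟨k, hk⟩
    exact ⟨k - (Pf ∩ Qf).card, by omega⟩
  have hedge : ∃ e, e ∈ D := by
    by_contra hempty
    push_neg at hempty
    apply hne
    apply TrackAux.walk_eq_of_edges_eq p q hp hq
    intro e
    have h := hempty e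
    rw [hDdef, Set.mem_setOf_eq] at h
    tauto
  obtain ⟨e, he⟩ := hedge
  obtain ⟨a, b, rfl⟩ : ∃ a b, e = s(a, b) := by
    induction e using Sym2.ind with
    | _ a b => exact ⟨a, b, rfl⟩
  have heG : s(a, b) ∈ G.edgeSet := by
    rcases he with ⟨h1, _⟩ | ⟨h1, _⟩
    · exact p.edges_subset_edgeSet h1
    · exact q.edges_subset_edgeSet h1
  have hadjH : H.Adj a b := by
    rw [hHdef, fromEdgeSet_adj]
    exact ⟨he, (G.mem_edgeSet.mp heG).ne⟩
  exact @TrackAux.no_edge_of_acyclic_even V _ _ H (fun a b => Classical.propDecidable _) hHac heven _ _ hadjH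
end

section
/- For a reduced undirected edge-weighted s-t graph G with nonnegative edge weights, a set of edges is a minimum-weight tracking edge set if and only if it is a minimum-weight feedback edge set; consequently the complement of a maximum-weight spanning tree is a minimum-weight tracking edge set. -/
open SimpleGraph

/-- Total weight of a set of edges. -/
noncomputable def eweight {V : Type} (w : Sym2 V → ℝ) (S : Set (Sym2 V)) : ℝ :=
  ∑ᶠ e ∈ S, w e

open SimpleGraph Walk
open scoped Classical symmDiff
noncomputable section

variable {V : Type} {G : SimpleGraph V}


/-- In a path, any edge containing the start vertex is the first edge. -/
lemma edge_at_head {u x v : V} (h : G.Adj u x) (p' : G.Walk x v)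
    (hp : (Walk.cons h p').IsPath) {e : Sym2 V} (he : e ∈ (Walk.cons h p').edges)
    (hu : u ∈ e) : e = s(u, x) := by
  rw [Walk.edges_cons, List.mem_cons] at he
  rcases he with he | he
  · exact he
  · exfalso
    rw [Walk.cons_isPath_iff] at hp
    induction e with
    | h a b =>
      rcases Sym2.mem_iff.mp hu with rfl | rfl
      · exact hp.2 (p'.fst_mem_support_of_mem_edges he)
      · exact hp.2 (p'.snd_mem_support_of_mem_edges he)

/-- A path is determined by the set of its edges. -/
lemma path_eq_of_edges_iff {u v : V} (p : G.Walk u v) :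
    ∀ (q : G.Walk u v), p.IsPath → q.IsPath →
      (∀ e, e ∈ p.edges ↔ e ∈ q.edges) → p = q := by
  induction p with
  | @nil u =>
    intro q _ hq hiff
    cases q with
    | nil => rfl
    | @cons _ y _ h q' =>
      exact absurd ((hiff s(u, y)).mpr (by simp)) (by simp)
  | @cons u x v h p' ih =>
    intro q hp hq hiff
    cases q with
    | nil =>
      exfalso
      exact absurd ((hiff s(u, x)).mp (by simp)) (by simp)
    | @cons _ y _ h' q' =>
      have hxy : s(u, y) = s(u, x) :=
        edge_at_head h p' hp ((hiff _).mpr (by simp)) (by simp)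
      have hyx : y = x := by
        rcases Sym2.eq_iff.mp hxy with ⟨-, rfl⟩ | ⟨rfl, rfl⟩
        · rfl
        · exact (G.irrefl h').elim
      subst hyx
      have hp' := (Walk.cons_isPath_iff _ _).mp hp
      have hq' := (Walk.cons_isPath_iff _ _).mp hq
      have : p' = q' := by
        refine ih q' hp'.1 hq'.1 fun e => ⟨fun hep => ?_, fun heq => ?_⟩
        · have : e ∈ (Walk.cons h' q').edges := (hiff e).mp (by simp [hep])
          rw [Walk.edges_cons, List.mem_cons] at this
          rcases this with rfl | h2
          · exfalso
            exact hp'.2 (p'.fst_mem_support_of_mem_edges hep)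
          · exact h2
        · have : e ∈ (Walk.cons h p').edges := (hiff e).mpr (by simp [heq])
          rw [Walk.edges_cons, List.mem_cons] at this
          rcases this with rfl | h2
          · exfalso
            exact hq'.2 (q'.fst_mem_support_of_mem_edges heq)
          · exact h2
      rw [this]

/-- Number of edges of a list containing a given vertex. -/
noncomputable def einc (x : V) (l : List (Sym2 V)) : ℕ :=
  l.countP (fun e => @decide (x ∈ e) (Classical.propDecidable _))

lemma einc_nil (x : V) : einc x [] = 0 := rfl

lemma einc_cons (x : V) (e : Sym2 V) (l : List (Sym2 V)) :
    einc x (e :: l) = (if x ∈ e then 1 else 0) + einc x l := by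
  unfold einc
  rw [List.countP_cons]
  by_cases h : x ∈ e <;> simp [h] <;> omega

lemma einc_eq_zero_of_not_mem_support {u v x : V} (p : G.Walk u v)
    (hx : x ∉ p.support) : einc x p.edges = 0 := by
  induction p with
  | nil => rfl
  | @cons a b c h p' ih =>
    rw [Walk.edges_cons, einc_cons]
    rw [Walk.support_cons, List.mem_cons] at hx
    push_neg at hx
    rw [if_neg, ih hx.2, add_zero]
    rw [Sym2.mem_iff]
    push_neg
    exact ⟨hx.1, fun hb => hx.2 (hb ▸ p'.start_mem_support)⟩

lemma einc_of_mem_support {u v x : V} (p : G.Walk u v) (hp : p.IsPath)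
    (hx : x ∈ p.support) :
    einc x p.edges + (if x = u then 1 else 0) + (if x = v then 1 else 0) = 2 := by
  induction p with
  | @nil a =>
    simp only [Walk.support_nil, List.mem_singleton] at hx
    subst hx
    simp [einc_nil]
  | @cons a b c h p' ih =>
    have hp' := (Walk.cons_isPath_iff _ _).mp hp
    rw [Walk.edges_cons, einc_cons]
    by_cases hxa : x = a
    · subst hxa
      have h1 : x ∈ s(x, b) := by simp
      have h2 : einc x p'.edges = 0 := einc_eq_zero_of_not_mem_support p' hp'.2
      have hxc : x ≠ c := fun hc => hp'.2 (hc ▸ p'.end_mem_support)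
      simp [h1, h2, hxc]
    · have hxp' : x ∈ p'.support := by
        rw [Walk.support_cons, List.mem_cons] at hx
        tauto
      have := ih hp'.1 hxp'
      by_cases hxb : x = b
      · subst hxb
        have h1 : x ∈ s(a, x) := by simp
        rw [if_pos rfl] at this
        rw [if_pos h1, if_neg hxa]
        omega
      · have h1 : x ∉ s(a, b) := by
          rw [Sym2.mem_iff]; push_neg; exact ⟨hxa, hxb⟩
        rw [if_neg hxb] at this
        rw [if_neg h1, if_neg hxa]
        omega

lemma einc_parity {s t : V} (p q : G.Walk s t) (hp : p.IsPath) (hq : q.IsPath) :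
    ∀ x : V, einc x p.edges % 2 = einc x q.edges % 2 := by
  intro x
  by_cases h1 : x ∈ p.support <;> by_cases h2 : x ∈ q.support
  · have ha := einc_of_mem_support p hp h1
    have hb := einc_of_mem_support q hq h2
    omega
  · have ha := einc_of_mem_support p hp h1
    have hb := einc_eq_zero_of_not_mem_support q h2
    have hxs : x ≠ s := fun hs => h2 (hs ▸ q.start_mem_support)
    have hxt : x ≠ t := fun ht => h2 (ht ▸ q.end_mem_support)
    rw [if_neg hxs, if_neg hxt] at ha
    omega
  · have ha := einc_of_mem_support q hq h2
    have hb := einc_eq_zero_of_not_mem_support p h1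
    have hxs : x ≠ s := fun hs => h1 (hs ▸ p.start_mem_support)
    have hxt : x ≠ t := fun ht => h1 (ht ▸ p.end_mem_support)
    rw [if_neg hxs, if_neg hxt] at ha
    omega
  · rw [einc_eq_zero_of_not_mem_support p h1, einc_eq_zero_of_not_mem_support q h2]

lemma exists_ne_incident {s t : V} {p q : G.Walk s t} (hp : p.IsPath) (hq : q.IsPath)
    (hpar : ∀ x : V, einc x p.edges % 2 = einc x q.edges % 2)
    (β : V) {d : Sym2 V} (hd : ¬(d ∈ p.edges ↔ d ∈ q.edges)) (hβ : β ∈ d) :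
    ∃ d', ¬(d' ∈ p.edges ↔ d' ∈ q.edges) ∧ β ∈ d' ∧ d' ≠ d := by
  by_contra hno
  push_neg at hno
  have hno' : ∀ d', ((d' ∈ p.edges ∧ d' ∉ q.edges) ∨ (d' ∉ p.edges ∧ d' ∈ q.edges)) →
      β ∈ d' → d' = d := by
    intro d' h1 h2
    exact hno d' (by tauto) h2
  have hdx : (d ∈ p.edges ∧ d ∉ q.edges) ∨ (d ∉ p.edges ∧ d ∈ q.edges) := by tauto
  have hfilt : ∀ (l : List (Sym2 V)), l.Nodup →
      ((l.filter (fun e => @decide (β ∈ e) (Classical.propDecidable _))).toFinset.card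
        = einc β l ∧ ∀ e, e ∈ (l.filter (fun e => @decide (β ∈ e) (Classical.propDecidable _))).toFinset ↔ (e ∈ l ∧ β ∈ e)) := by
    intro l hl
    constructor
    · rw [List.toFinset_card_of_nodup (hl.filter _), einc, List.countP_eq_length_filter]
    · intro e
      simp only [List.mem_toFinset, List.mem_filter, decide_eq_true_eq]
  obtain ⟨hcp, hmp⟩ := hfilt p.edges hp.isTrail.edges_nodup
  obtain ⟨hcq, hmq⟩ := hfilt q.edges hq.isTrail.edges_nodup
  set Ap := (p.edges.filter (fun e => @decide (β ∈ e) (Classical.propDecidable _))).toFinset with hAp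
  set Aq := (q.edges.filter (fun e => @decide (β ∈ e) (Classical.propDecidable _))).toFinset with hAq
  have hsd : Ap ∆ Aq = {d} := by
    ext e
    rw [Finset.mem_symmDiff, Finset.mem_singleton, hmp, hmq]
    constructor
    · rintro (⟨⟨h1, h2⟩, h3⟩ | ⟨⟨h1, h2⟩, h3⟩)
      · exact hno' e (Or.inl ⟨h1, fun hh => h3 ⟨hh, h2⟩⟩) h2
      · exact hno' e (Or.inr ⟨fun hh => h3 ⟨hh, h2⟩, h1⟩) h2
    · rintro rfl
      rcases hdx with ⟨h1, h2⟩ | ⟨h1, h2⟩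
      · exact Or.inl ⟨⟨h1, hβ⟩, fun hh => h2 hh.1⟩
      · exact Or.inr ⟨⟨h2, hβ⟩, fun hh => h1 hh.1⟩
  have hc1 : (Ap ∆ Aq).card = 1 := by rw [hsd]; simp
  have e3 : (Ap ∆ Aq).card = (Ap \ Aq).card + (Aq \ Ap).card := by
    rw [symmDiff_def, Finset.sup_eq_union, Finset.card_union_of_disjoint disjoint_sdiff_sdiff]
  have e1 : (Ap \ Aq).card + (Ap ∩ Aq).card = Ap.card := Finset.card_sdiff_add_card_inter _ _
  have e2 : (Aq \ Ap).card + (Aq ∩ Ap).card = Aq.card := Finset.card_sdiff_add_card_inter _ _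
  have e4 : (Ap ∩ Aq).card = (Aq ∩ Ap).card := by rw [Finset.inter_comm]
  have := hpar β
  rw [← hcp, ← hcq] at this
  omega

lemma mem_etrackSeq {T : Set (Sym2 V)} {l : List (Sym2 V)} {e : Sym2 V} :
    e ∈ etrackSeq T l ↔ e ∈ l ∧ e ∈ T := by
  unfold etrackSeq
  rw [List.mem_filter, decide_eq_true_eq]

lemma tracking_of_acyclic [Fintype V] {s t : V} {T : Set (Sym2 V)}
    (hT : (G.deleteEdges T).IsAcyclic) : IsTrackingEdgeSet G s t T := by
  intro p q hp hq hseq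
  have hmem : ∀ e ∈ T, (e ∈ p.edges ↔ e ∈ q.edges) := by
    intro e heT
    constructor
    · intro h
      exact (mem_etrackSeq.mp (hseq ▸ mem_etrackSeq.mpr ⟨h, heT⟩)).1
    · intro h
      exact (mem_etrackSeq.mp (hseq.symm ▸ mem_etrackSeq.mpr ⟨h, heT⟩)).1
  by_contra hne
  have hD : ∃ e, ¬(e ∈ p.edges ↔ e ∈ q.edges) := by
    by_contra h
    push_neg at h
    exact hne (path_eq_of_edges_iff p q hp hq fun e => by
      have := h e; tauto)
  set D : Set (Sym2 V) := {e | ¬(e ∈ p.edges ↔ e ∈ q.edges)} with hDdef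
  have hDG : ∀ e ∈ D, e ∈ G.edgeSet ∧ e ∉ T := by
    intro e he
    have he' : ¬(e ∈ p.edges ↔ e ∈ q.edges) := he
    constructor
    · rcases Classical.em (e ∈ p.edges) with h | h
      · exact p.edges_subset_edgeSet h
      · have : e ∈ q.edges := by tauto
        exact q.edges_subset_edgeSet this
    · intro heT
      exact he' (hmem e heT)
  set H : SimpleGraph V := fromEdgeSet D with hHdef
  have hHsub : H.edgeSet ⊆ (G.deleteEdges T).edgeSet := by
    rw [hHdef, edgeSet_fromEdgeSet, edgeSet_deleteEdges]
    rintro e ⟨heD, -⟩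
    exact ⟨(hDG e heD).1, (hDG e heD).2⟩
  have hadj_of_mem : ∀ e ∈ D, ∀ x y : V, e = s(x, y) → H.Adj x y := by
    intro e he x y hxy
    subst hxy
    refine (fromEdgeSet_adj D).mpr ⟨he, fun hxy => ?_⟩
    subst hxy
    exact G.not_isDiag_of_mem_edgeSet (hDG _ he).1 (by simp)
  -- maximal path in H
  set S : Set ℕ := {n | ∃ (x y : V) (r : H.Walk x y), r.IsPath ∧ r.length = n} with hSdef
  have hbdd : BddAbove S := by
    refine ⟨Fintype.card V, ?_⟩
    rintro n ⟨x, y, r, hr, rfl⟩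
    exact hr.length_lt.le
  obtain ⟨e₀, he₀⟩ := hD
  have h1S : 1 ∈ S := by
    induction e₀ with
    | h x y =>
      have hadj : H.Adj x y := hadj_of_mem _ he₀ x y rfl
      exact ⟨x, y, Walk.cons hadj Walk.nil, by simp [hadj.ne], by simp⟩
  have hSne : S.Nonempty := ⟨1, h1S⟩
  set N := sSup S with hNdef
  obtain ⟨α, β, r, hr, hrl⟩ := Nat.sSup_mem hSne hbdd
  have hN1 : 1 ≤ N := le_csSup hbdd h1S
  have hαβ : β ≠ α := by
    rintro rfl
    rw [(Walk.isPath_iff_eq_nil (p := r)).mp hr] at hrl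
    simp at hrl
    omega
  set rev := r.reverse with hrevdef
  have hrev : rev.IsPath := hr.reverse
  have hrevl : rev.length = N := by simp [hrevdef, hrl, hNdef]
  obtain ⟨γ, hadjβγ, rtail, hrtl⟩ := Walk.exists_eq_cons_of_ne hαβ rev
  have hdD : s(β, γ) ∈ D := by
    have : s(β, γ) ∈ H.edgeSet := hadjβγ
    rw [hHdef, edgeSet_fromEdgeSet] at this
    exact this.1
  have hpar : ∀ x : V, einc x p.edges % 2 = einc x q.edges % 2 :=
    einc_parity p q hp hq
  obtain ⟨d', hd'D, hβd', hd'd⟩ := exists_ne_incident hp hq hpar β hdD (by simp)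
  obtain ⟨δ, rfl⟩ := Sym2.mem_iff_exists.mp hβd'
  have hβδ : β ≠ δ := by
    rintro rfl
    exact G.not_isDiag_of_mem_edgeSet (hDG _ hd'D).1 (by simp)
  have hadj' : H.Adj β δ := hadj_of_mem _ hd'D β δ rfl
  by_cases hδ : δ ∈ rev.support
  · -- build a cycle
    set seg := rev.takeUntil δ hδ with hsegdef
    have hseg : seg.IsPath := hr.reverse.takeUntil hδ
    have he : s(δ, β) ∉ seg.edges := by
      intro hmem2
      have h2 : s(δ, β) ∈ rev.edges := rev.edges_takeUntil_subset hδ hmem2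
      rw [hrtl] at h2
      have h3 := edge_at_head hadjβγ rtail (hrtl ▸ hrev) h2 (by simp)
      rcases Sym2.eq_iff.mp h3 with ⟨rfl, rfl⟩ | ⟨rfl, -⟩
      · exact hβδ rfl
      · exact hd'd (by rw [Sym2.eq_swap])
    have hcyc : (Walk.cons hadj'.symm seg).IsCycle :=
      SimpleGraph.Path.cons_isCycle ⟨seg, hseg⟩ hadj'.symm he
    have hcyc' := hcyc.transfer (H := G.deleteEdges T)
      (fun e he' => hHsub ((Walk.cons hadj'.symm seg).edges_subset_edgeSet he'))
    exact hT _ hcyc'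
  · -- extend the maximal path
    have hextp : (Walk.cons hadj'.symm rev).IsPath := by
      rw [Walk.cons_isPath_iff]
      exact ⟨hrev, hδ⟩
    have : rev.length + 1 ∈ S := ⟨δ, α, Walk.cons hadj'.symm rev, hextp, by simp⟩
    have := le_csSup hbdd this
    omega


lemma mem_prefix_of_mem_suffix {α : Type} {S l1 l3' : List α} {b x : α} (hS : S.Nodup)
    (h1 : l1 <+: S) (h3 : (b :: l3') <:+ S) (hx1 : x ∈ l1) (hx3 : x ∈ b :: l3') :
    b ∈ l1 := by
  by_contra hb
  obtain ⟨t, ht⟩ := h1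
  obtain ⟨z, hz⟩ := h3
  have heq : l1 ++ t = z ++ (b :: l3') := by rw [ht, hz]
  have hdisj : l1.Disjoint t := by
    have := ht ▸ hS
    exact (List.nodup_append'.mp this).2.2
  rcases List.append_eq_append_iff.mp heq with ⟨w, hw1, hw2⟩ | ⟨w, hw1, hw2⟩
  · exact hdisj hx1 (hw2 ▸ List.mem_append_right w hx3)
  · cases w with
    | nil => simp at hw2; exact hdisj hx1 (hw2 ▸ hx3)
    | cons c w' =>
      have : c = b := by
        have := congrArg (fun l => l.head?) hw2.symm
        simpa using this
      subst this
      exact hb (by rw [hw1]; exact List.mem_append_right _ List.mem_cons_self)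

lemma cover_of_prefix_suffix {α : Type} {S l1 l3' : List α} {a : α} (hS : S.Nodup)
    (h1 : l1 <+: S) (h3 : (a :: l3') <:+ S) (ha : a ∈ l1) :
    ∀ x ∈ S, x ∈ l1 ∨ x ∈ a :: l3' := by
  obtain ⟨t, ht⟩ := h1
  obtain ⟨z, hz⟩ := h3
  have heq : l1 ++ t = z ++ (a :: l3') := by rw [ht, hz]
  have hdisj : l1.Disjoint t := by
    have := ht ▸ hS
    exact (List.nodup_append'.mp this).2.2
  rcases List.append_eq_append_iff.mp heq with ⟨w, hw1, hw2⟩ | ⟨w, hw1, hw2⟩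
  · exact absurd (hw2 ▸ List.mem_append_right w (by simp)) fun hh => hdisj ha hh
  · intro x hx
    rw [← hz, List.mem_append] at hx
    rcases hx with hx | hx
    · left; rw [hw1]; exact List.mem_append_left _ hx
    · right; exact hx

lemma IsPath.append' {a b c : V} {p : G.Walk a b} {q : G.Walk b c} (hp : p.IsPath)
    (hq : q.IsPath) (hS : ∀ x ∈ p.support, x ∈ q.support → x = b) :
    (p.append q).IsPath := by
  rw [Walk.isPath_def, Walk.support_append, List.nodup_append']
  refine ⟨hp.support_nodup, hq.support_nodup.sublist (List.tail_sublist _), ?_⟩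
  intro x hx1 hx2
  have hxb : x = b := hS x hx1 (List.mem_of_mem_tail hx2)
  rw [hxb] at hx2
  have hnd := q.support_eq_cons ▸ hq.support_nodup
  exact (List.nodup_cons.mp hnd).1 hx2

lemma takeUntil_start {u v : V} (p : G.Walk u v) (h : u ∈ p.support) :
    p.takeUntil u h = Walk.nil := by
  cases p <;> simp [Walk.takeUntil]

lemma takeUntil_cons {a b c x : V} (h : G.Adj a b) (p' : G.Walk b c)
    (hx : x ∈ (Walk.cons h p').support) (hne : a ≠ x) (hx' : x ∈ p'.support) :
    (Walk.cons h p').takeUntil x hx = Walk.cons h (p'.takeUntil x hx') := by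
  conv_lhs => rw [Walk.takeUntil]
  rw [dif_neg hne]

lemma exists_takeUntil_pred {u v : V} (p : G.Walk u v) (Q : V → Prop)
    (hx : ∃ x ∈ p.support, Q x) :
    ∃ a, ∃ ha : a ∈ p.support, Q a ∧ ∀ x ∈ (p.takeUntil a ha).support, Q x → x = a := by
  induction p with
  | @nil u =>
    obtain ⟨x, hx1, hx2⟩ := hx
    simp only [Walk.support_nil, List.mem_singleton] at hx1
    subst hx1
    refine ⟨x, by simp, hx2, fun y hy _ => ?_⟩
    have := Walk.support_takeUntil_subset _ (show x ∈ (Walk.nil : G.Walk x x).support by simp) hy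
    simpa using this
  | @cons a b c h p' ih =>
    by_cases hQ : Q a
    · refine ⟨a, Walk.start_mem_support _, hQ, fun y hy _ => ?_⟩
      rw [takeUntil_start] at hy
      simpa using hy
    · obtain ⟨x, hx1, hx2⟩ := hx
      have hxa : x ≠ a := fun hh => hQ (hh ▸ hx2)
      have hx1' : x ∈ p'.support := by
        rw [Walk.support_cons, List.mem_cons] at hx1
        tauto
      obtain ⟨a', ha', hQa', hmin⟩ := ih ⟨x, hx1', hx2⟩
      have haa' : a ≠ a' := fun hh => hQ (hh ▸ hQa')
      refine ⟨a', by rw [Walk.support_cons]; exact List.mem_cons_of_mem _ ha', hQa', ?_⟩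
      intro y hy hQy
      rw [takeUntil_cons h p' _ haa' ha', Walk.support_cons, List.mem_cons] at hy
      rcases hy with rfl | hy
      · exact absurd hQy hQ
      · exact hmin y hy hQy


lemma exists_two_arcs {a b : V} (c' : G.Walk a a) (hc : c'.IsCycle) (hb : b ∈ c'.support)
    (hab : a ≠ b) :
    ∃ (ρ1 ρ2 : G.Walk a b), ρ1.IsPath ∧ ρ2.IsPath ∧
      (∀ x ∈ ρ1.support, x ∈ c'.support) ∧ (∀ x ∈ ρ2.support, x ∈ c'.support) ∧
      (∀ e ∈ ρ1.edges, e ∈ c'.edges) ∧ (∀ e ∈ ρ2.edges, e ∈ c'.edges) ∧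
      ρ1.edges ≠ ρ2.edges := by
  obtain ⟨htrail, hnnil, htlnd⟩ := (Walk.isCycle_def c').mp hc
  set ρ1 := c'.takeUntil b hb with hρ1
  set d := c'.dropUntil b hb with hd
  obtain ⟨tl, hsupp⟩ : ∃ tl, c'.support = a :: tl := ⟨_, c'.support_eq_cons⟩
  have htl : tl.Nodup := by rw [hsupp] at htlnd; exact htlnd
  have hbtl : b ∈ tl := by
    rcases List.mem_cons.mp (hsupp ▸ hb) with rfl | h
    · exact absurd rfl hab
    · exact h
  have htlnnil : tl ≠ [] := fun hh => by rw [hh] at hbtl; simp at hbtl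
  have hclast : c'.support.getLast? = some a := by
    rw [List.getLast?_eq_getLast c'.support_ne_nil]
    exact congrArg some c'.getLast_support
  have htl_last : tl.getLast? = some a := by
    rw [hsupp] at hclast
    cases tl with
    | nil => exact absurd rfl htlnnil
    | cons z tl' => rwa [List.getLast?_cons_cons] at hclast
  have hpre : ρ1.support <+: c'.support :=
    ⟨d.support.tail, by rw [← Walk.support_append, Walk.take_spec]⟩
  obtain ⟨r, hρ1supp⟩ : ∃ r, ρ1.support = a :: r := ⟨_, ρ1.support_eq_cons⟩
  have hrpre : r <+: tl := by
    have := hρ1supp ▸ hsupp ▸ hpre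
    exact (List.cons_prefix_cons.mp this).2
  have hrnodup : r.Nodup := hrpre.sublist.nodup htl
  have hρ1nnil : ρ1.edges ≠ [] := by
    obtain ⟨w, hadj, p', hp'⟩ := Walk.exists_eq_cons_of_ne hab ρ1
    rw [hp', Walk.edges_cons]
    simp
  have hbr : b ∈ r := by
    have h1 : b ∈ ρ1.support := ρ1.end_mem_support
    rcases List.mem_cons.mp (hρ1supp ▸ h1) with rfl | h
    · exact absurd rfl hab
    · exact h
  have hanr : a ∉ r := by
    intro har
    obtain ⟨t2, ht2⟩ := hrpre
    cases t2 with
    | nil =>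
      rw [List.append_nil] at ht2
      subst ht2
      have : ρ1.support = c'.support := by rw [hρ1supp, hsupp]
      have hlast2 : ρ1.support.getLast? = some b := by
        rw [List.getLast?_eq_getLast ρ1.support_ne_nil]
        exact congrArg some ρ1.getLast_support
      rw [this, hclast] at hlast2
      exact hab (by injection hlast2)
    | cons z t2' =>
      have hmem : a ∈ z :: t2' := by
        have h2 := htl_last
        rw [← ht2, List.getLast?_append_of_ne_nil _ (by simp)] at h2
        exact List.mem_of_getLast? h2
      have hdisj := (List.nodup_append'.mp (ht2 ▸ htl)).2.2
      exact hdisj har hmem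
  have hρ1path : ρ1.IsPath := by
    rw [Walk.isPath_def, hρ1supp, List.nodup_cons]
    exact ⟨hanr, hrnodup⟩
  obtain ⟨sfx, hdsupp⟩ : ∃ s, d.support = b :: s := ⟨_, d.support_eq_cons⟩
  have hrs : tl = r ++ sfx := by
    have h1 : c'.support = ρ1.support ++ d.support.tail := by
      rw [← Walk.support_append, Walk.take_spec]
    rw [hsupp, hρ1supp, hdsupp] at h1
    simpa using h1
  have hsfxnodup : sfx.Nodup := (List.nodup_append'.mp (hrs ▸ htl)).2.1
  have hbnsfx : b ∉ sfx := fun hbs => (List.nodup_append'.mp (hrs ▸ htl)).2.2 hbr hbs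
  have hdpath : d.IsPath := by
    rw [Walk.isPath_def, hdsupp, List.nodup_cons]
    exact ⟨hbnsfx, hsfxnodup⟩
  have hdnnil : d.edges ≠ [] := by
    obtain ⟨w, hadj, p', hp'⟩ := Walk.exists_eq_cons_of_ne (Ne.symm hab) d
    rw [hp', Walk.edges_cons]
    simp
  have hsplit : ρ1.edges ++ d.edges = c'.edges := by
    rw [← Walk.edges_append, Walk.take_spec]
  have hedisj : ρ1.edges.Disjoint d.edges := (List.nodup_append'.mp (hsplit ▸ htrail.edges_nodup)).2.2
  refine ⟨ρ1, d.reverse, hρ1path, hdpath.reverse, ?_, ?_, ?_, ?_, ?_⟩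
  · exact fun x hx => c'.support_takeUntil_subset hb hx
  · intro x hx
    rw [Walk.support_reverse, List.mem_reverse] at hx
    exact c'.support_dropUntil_subset hb hx
  · exact fun e he => c'.edges_takeUntil_subset hb he
  · intro e he
    rw [Walk.edges_reverse, List.mem_reverse] at he
    exact c'.edges_dropUntil_subset hb he
  · intro heq
    obtain ⟨f, hf⟩ := List.exists_mem_of_ne_nil d.edges hdnnil
    have hf2 : f ∈ ρ1.edges := by
      rw [heq, Walk.edges_reverse, List.mem_reverse]
      exact hf
    exact hedisj hf2 hf

lemma mem_etrackSeq' {T : Set (Sym2 V)} {l : List (Sym2 V)} {e : Sym2 V} :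
    e ∈ etrackSeq T l ↔ e ∈ l ∧ e ∈ T := by
  unfold etrackSeq
  rw [List.mem_filter, decide_eq_true_eq]

lemma mem_tail_support_of_closed {v : V} (c : G.Walk v v) (hne : c ≠ Walk.nil) :
    ∀ x ∈ c.support, x ∈ c.support.tail := by
  intro x hx
  cases c with
  | nil => exact absurd rfl hne
  | cons h ct =>
    rw [Walk.support_cons, List.tail_cons]
    rcases List.mem_cons.mp (by rwa [Walk.support_cons] at hx) with rfl | hh
    · exact ct.end_mem_support
    · exact hh

lemma acyclic_of_tracking {s t : V} (hred : Reduced G s t) {T : Set (Sym2 V)}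
    (htr : IsTrackingEdgeSet G s t T) : (G.deleteEdges T).IsAcyclic := by
  by_contra hcyc
  simp only [IsAcyclic, not_forall, not_not] at hcyc
  obtain ⟨v, c, hc⟩ := hcyc
  have hnotT : ∀ e ∈ (G.deleteEdges T).edgeSet, e ∈ G.edgeSet ∧ e ∉ T := by
    intro e he
    rw [edgeSet_deleteEdges] at he
    exact he
  -- first edge of the cycle
  obtain ⟨x₀, hadj₀, ct, hcdec⟩ : ∃ (x₀ : V) (h : (G.deleteEdges T).Adj v x₀) (ct : (G.deleteEdges T).Walk x₀ v),
      c = Walk.cons h ct := by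
    cases hc2 : c with
    | nil => rw [hc2] at hc; exact (Walk.IsCycle.not_of_nil hc).elim
    | cons h ct => exact ⟨_, h, ct, rfl⟩
  have he₀c : s(v, x₀) ∈ c.edges := by rw [hcdec]; simp
  have he₀F : s(v, x₀) ∈ (G.deleteEdges T).edgeSet := c.edges_subset_edgeSet he₀c
  have he₀G : s(v, x₀) ∈ G.edgeSet := (hnotT _ he₀F).1
  obtain ⟨P, hP, heP⟩ := hred.2 _ he₀G
  have hvP : v ∈ P.support := P.fst_mem_support_of_mem_edges heP
  have hx₀P : x₀ ∈ P.support := P.snd_mem_support_of_mem_edges heP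
  have hvC : v ∈ c.support := c.start_mem_support
  have hx₀C : x₀ ∈ c.support := by
    rw [hcdec, Walk.support_cons]
    exact List.mem_cons_of_mem _ ct.start_mem_support
  -- first and last intersection vertices
  obtain ⟨a, haP, haC, hafirst⟩ := exists_takeUntil_pred P (fun x => x ∈ c.support)
    ⟨v, hvP, hvC⟩
  obtain ⟨b, hbrev, hbC, hblast⟩ := exists_takeUntil_pred P.reverse (fun x => x ∈ c.support)
    ⟨v, by rw [Walk.support_reverse, List.mem_reverse]; exact hvP, hvC⟩
  set P1 := P.takeUntil a haP with hP1def
  set P3 := (P.reverse.takeUntil b hbrev).reverse with hP3def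
  have hP1path : P1.IsPath := hP.takeUntil haP
  have hP3path : P3.IsPath := (hP.reverse.takeUntil hbrev).reverse
  have hP1pre : P1.support <+: P.support :=
    ⟨(P.dropUntil a haP).support.tail, by rw [← Walk.support_append, Walk.take_spec]⟩
  have hP3suf : P3.support <:+ P.support := by
    have h1 : (P.reverse.takeUntil b hbrev).support <+: P.reverse.support :=
      ⟨(P.reverse.dropUntil b hbrev).support.tail, by rw [← Walk.support_append, Walk.take_spec]⟩
    rw [Walk.support_reverse] at h1
    have h2 : (P.reverse.takeUntil b hbrev).support.reverse <:+ P.support.reverse.reverse :=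
      List.reverse_suffix.mpr h1
    rw [List.reverse_reverse] at h2
    rw [hP3def, Walk.support_reverse]
    exact h2
  have hP3supp_mem : ∀ x, x ∈ P3.support ↔ x ∈ (P.reverse.takeUntil b hbrev).support := by
    intro x
    rw [hP3def, Walk.support_reverse, List.mem_reverse]
  have hP3last : ∀ x ∈ P3.support, x ∈ c.support → x = b := by
    intro x hx hxc
    exact hblast x ((hP3supp_mem x).mp hx) hxc
  have hP3cons : P3.support = b :: P3.support.tail := P3.support_eq_cons
  have hab : a ≠ b := by
    intro hh
    subst hh
    have hcov := cover_of_prefix_suffix hP.support_nodup hP1pre (hP3cons ▸ hP3suf)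
      (Walk.end_mem_support P1)
    have hva : v = a := by
      rcases hcov v hvP with h | h
      · exact hafirst v h hvC
      · exact hP3last v (hP3cons ▸ h) hvC
    have hx₀a : x₀ = a := by
      rcases hcov x₀ hx₀P with h | h
      · exact hafirst x₀ h hx₀C
      · exact hP3last x₀ (hP3cons ▸ h) hx₀C
    exact hadj₀.ne (hva.trans hx₀a.symm)
  have hP1P3disj : ∀ x ∈ P1.support, x ∈ P3.support → False := by
    intro x hx1 hx3
    have hbP1 : b ∈ P1.support :=
      mem_prefix_of_mem_suffix hP.support_nodup hP1pre (hP3cons ▸ hP3suf) hx1 (hP3cons ▸ hx3)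
    exact hab (hafirst b hbP1 hbC).symm
  -- rotate the cycle at a
  have hcnnil : c ≠ Walk.nil := hc.ne_nil
  have haCs : a ∈ c.support := haC
  set c' := c.rotate a haCs with hc'def
  have hc' : c'.IsCycle := hc.rotate haCs
  have hc'sub : ∀ x ∈ c'.support, x ∈ c.support := by
    intro x hx
    rcases List.mem_cons.mp (c'.support_eq_cons ▸ hx) with rfl | hh
    · exact haC
    · have := (Walk.support_rotate c a haCs).perm.mem_iff.mp hh
      exact List.mem_of_mem_tail this
  have hc'edges : ∀ e ∈ c'.edges, e ∈ c.edges := by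
    intro e he
    exact (Walk.rotate_edges c a haCs).perm.mem_iff.mp he
  have hbC' : b ∈ c'.support := by
    have hbtail : b ∈ c.support.tail := mem_tail_support_of_closed c hcnnil b hbC
    have := (Walk.support_rotate c a haCs).perm.mem_iff.mpr hbtail
    exact List.mem_of_mem_tail this
  obtain ⟨ρ1, ρ2, hρ1p, hρ2p, hρ1s, hρ2s, hρ1e, hρ2e, hρne⟩ :=
    exists_two_arcs c' hc' hbC' hab
  -- transfer to G
  have hsub1 : ∀ e ∈ ρ1.edges, e ∈ G.edgeSet :=
    fun e he => (hnotT e (ρ1.edges_subset_edgeSet he)).1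
  have hsub2 : ∀ e ∈ ρ2.edges, e ∈ G.edgeSet :=
    fun e he => (hnotT e (ρ2.edges_subset_edgeSet he)).1
  have hρ1T : ∀ e ∈ ρ1.edges, e ∉ T :=
    fun e he => (hnotT e (ρ1.edges_subset_edgeSet he)).2
  have hρ2T : ∀ e ∈ ρ2.edges, e ∉ T :=
    fun e he => (hnotT e (ρ2.edges_subset_edgeSet he)).2
  set ρ1G := ρ1.transfer G hsub1 with hρ1Gdef
  set ρ2G := ρ2.transfer G hsub2 with hρ2Gdef
  have hρ1Gp : ρ1G.IsPath := hρ1p.transfer hsub1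
  have hρ2Gp : ρ2G.IsPath := hρ2p.transfer hsub2
  have hρ1Gs : ρ1G.support = ρ1.support := Walk.support_transfer _ _
  have hρ2Gs : ρ2G.support = ρ2.support := Walk.support_transfer _ _
  set W1 := P1.append (ρ1G.append P3) with hW1def
  set W2 := P1.append (ρ2G.append P3) with hW2def
  have hinner1 : (ρ1G.append P3).IsPath := by
    refine IsPath.append' hρ1Gp hP3path fun x hx hx3 => ?_
    rw [hρ1Gs] at hx
    exact hP3last x hx3 (hc'sub x (hρ1s x hx))
  have hinner2 : (ρ2G.append P3).IsPath := by
    refine IsPath.append' hρ2Gp hP3path fun x hx hx3 => ?_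
    rw [hρ2Gs] at hx
    exact hP3last x hx3 (hc'sub x (hρ2s x hx))
  have hW1path : W1.IsPath := by
    refine IsPath.append' hP1path hinner1 fun x hx hxin => ?_
    rcases (Walk.mem_support_append_iff _ _).mp hxin with h | h
    · rw [hρ1Gs] at h
      exact hafirst x hx (hc'sub x (hρ1s x h))
    · exact (hP1P3disj x hx h).elim
  have hW2path : W2.IsPath := by
    refine IsPath.append' hP1path hinner2 fun x hx hxin => ?_
    rcases (Walk.mem_support_append_iff _ _).mp hxin with h | h
    · rw [hρ2Gs] at h
      exact hafirst x hx (hc'sub x (hρ2s x h))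
    · exact (hP1P3disj x hx h).elim
  have hedges1 : W1.edges = P1.edges ++ (ρ1.edges ++ P3.edges) := by
    rw [hW1def, Walk.edges_append, Walk.edges_append, Walk.edges_transfer]
  have hedges2 : W2.edges = P1.edges ++ (ρ2.edges ++ P3.edges) := by
    rw [hW2def, Walk.edges_append, Walk.edges_append, Walk.edges_transfer]
  have hfilt1 : etrackSeq T ρ1.edges = [] := by
    refine List.filter_eq_nil_iff.mpr fun e he => ?_
    simpa using hρ1T e he
  have hfilt2 : etrackSeq T ρ2.edges = [] := by
    refine List.filter_eq_nil_iff.mpr fun e he => ?_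
    simpa using hρ2T e he
  have hseq : etrackSeq T W1.edges = etrackSeq T W2.edges := by
    unfold etrackSeq at hfilt1 hfilt2 ⊢
    rw [hedges1, hedges2, List.filter_append, List.filter_append,
      List.filter_append, List.filter_append, hfilt1, hfilt2]
  have hW12 : W1 = W2 := htr W1 W2 hW1path hW2path hseq
  have := congrArg Walk.edges hW12
  rw [hedges1, hedges2] at this
  have h2 := List.append_cancel_left this
  have h3 := List.append_cancel_right h2
  exact hρne h3


lemma acyclic_sup_edge {A : SimpleGraph V} (hA : A.IsAcyclic) {x y : V}
    (hxy : ¬A.Reachable x y) (hne : x ≠ y) :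
    (A ⊔ fromEdgeSet {s(x, y)}).IsAcyclic := by
  intro v c hc
  have hedge : ∀ e ∈ c.edges, e = s(x, y) ∨ e ∈ A.edgeSet := by
    intro e he
    have := c.edges_subset_edgeSet he
    rw [edgeSet_sup, edgeSet_fromEdgeSet] at this
    rcases this with h | h
    · exact Or.inr h
    · exact Or.inl h.1
  by_cases hmem : s(x, y) ∈ c.edges
  · have hxc : x ∈ c.support := c.fst_mem_support_of_mem_edges hmem
    set c' := c.rotate x hxc with hc'def
    have hc' : c'.IsCycle := hc.rotate hxc
    have hmem' : s(x, y) ∈ c'.edges := (Walk.rotate_edges c x hxc).perm.mem_iff.mpr hmem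
    have hyc : y ∈ c'.support := c'.snd_mem_support_of_mem_edges hmem'
    set p := c'.takeUntil y hyc with hpdef
    set d := c'.dropUntil y hyc with hddef
    have hsplit : p.edges ++ d.edges = c'.edges := by
      rw [← Walk.edges_append, Walk.take_spec]
    have hdisj : p.edges.Disjoint d.edges :=
      (List.nodup_append'.mp (hsplit ▸ hc'.isCircuit.isTrail.edges_nodup)).2.2
    have hc'edge : ∀ e ∈ c'.edges, e = s(x, y) ∨ e ∈ A.edgeSet := by
      intro e he
      exact hedge e ((Walk.rotate_edges c x hxc).perm.mem_iff.mp he)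
    by_cases hep : s(x, y) ∈ p.edges
    · -- d : y → x avoids the new edge
      have hdA : ∀ e ∈ d.edges, e ∈ A.edgeSet := by
        intro e he
        rcases hc'edge e (by rw [← hsplit]; exact List.mem_append_right _ he) with rfl | h
        · exact (hdisj hep he).elim
        · exact h
      exact hxy ((d.transfer A hdA).reverse.reachable)
    · have hpA : ∀ e ∈ p.edges, e ∈ A.edgeSet := by
        intro e he
        rcases hc'edge e (by rw [← hsplit]; exact List.mem_append_left _ he) with rfl | h
        · exact (hep he).elim
        · exact h
      exact hxy ((p.transfer A hpA).reachable)
  · have hcA : ∀ e ∈ c.edges, e ∈ A.edgeSet := by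
      intro e he
      rcases hedge e he with rfl | h
      · exact (hmem he).elim
      · exact h
    exact hA _ (hc.transfer hcA)

/-- number of edges -/
noncomputable def ecard [Fintype V] (B : SimpleGraph V) : ℕ :=
  (B.edgeSet.toFinite.toFinset).card

lemma exists_adj_not_reachable {B : SimpleGraph V} {u v : V}
    (w : G.Walk u v) (hnr : ¬B.Reachable u v) :
    ∃ x y : V, G.Adj x y ∧ ¬B.Reachable x y := by
  induction w with
  | nil => exact (hnr (Reachable.refl _)).elim
  | @cons a z b h w' ih =>
    by_cases hr : B.Reachable a z
    · exact ih fun hzv => hnr (hr.trans hzv)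
    · exact ⟨a, z, h, hr⟩

lemma exists_spanning_tree_ge [Fintype V] (hconn : G.Connected) {A : SimpleGraph V}
    (hAG : A ≤ G) (hA : A.IsAcyclic) :
    ∃ H' : SimpleGraph V, A ≤ H' ∧ H' ≤ G ∧ H'.IsTree := by
  set S : Set ℕ := {n | ∃ B : SimpleGraph V, (A ≤ B ∧ B ≤ G ∧ B.IsAcyclic) ∧ ecard B = n}
    with hSdef
  have hSne : S.Nonempty := ⟨ecard A, A, ⟨le_refl _, hAG, hA⟩, rfl⟩
  have hbdd : BddAbove S := by
    refine ⟨Fintype.card (Sym2 V), ?_⟩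
    rintro n ⟨B, hB, rfl⟩
    exact le_trans (Finset.card_le_card (Finset.subset_univ _)) (by simp)
  obtain ⟨B, ⟨hAB, hBG, hBac⟩, hBcard⟩ := Nat.sSup_mem hSne hbdd
  refine ⟨B, hAB, hBG, ?_, hBac⟩
  -- show B is connected
  haveI : Nonempty V := hconn.nonempty
  by_contra hBconn
  have hpre : ¬B.Preconnected := by
    intro hpre
    exact hBconn ⟨hpre⟩
  rw [Preconnected] at hpre
  push_neg at hpre
  obtain ⟨u, v, hnr⟩ := hpre
  obtain ⟨x, y, hGxy, hBnr⟩ := exists_adj_not_reachable ((hconn u v).some) hnr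
  set B' := B ⊔ fromEdgeSet {s(x, y)} with hB'def
  have hB'ac : B'.IsAcyclic := acyclic_sup_edge hBac hBnr hGxy.ne
  have hB'G : B' ≤ G := by
    refine sup_le hBG ?_
    intro a b hab
    rw [fromEdgeSet_adj] at hab
    obtain ⟨h1, h2⟩ := hab
    rw [Set.mem_singleton_iff] at h1
    rcases Sym2.eq_iff.mp h1 with ⟨rfl, rfl⟩ | ⟨rfl, rfl⟩
    · exact hGxy
    · exact hGxy.symm
  have hnew : s(x, y) ∉ B.edgeSet := fun hh => hBnr (Adj.reachable hh)
  have hlt : ecard B < ecard B' := by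
    apply Finset.card_lt_card
    rw [Finset.ssubset_iff_of_subset]
    · refine ⟨s(x, y), ?_, ?_⟩
      · rw [Set.Finite.mem_toFinset, hB'def, edgeSet_sup, edgeSet_fromEdgeSet]
        right
        exact ⟨rfl, by simp [hGxy.ne]⟩
      · rwa [Set.Finite.mem_toFinset]
    · intro e he
      rw [Set.Finite.mem_toFinset] at he ⊢
      rw [hB'def, edgeSet_sup]
      exact Or.inl he
  have : ecard B' ∈ S := ⟨B', ⟨le_trans hAB le_sup_left, hB'G, hB'ac⟩, rfl⟩
  have := le_csSup hbdd this
  omega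

lemma eweight_eq_sum [Fintype V] (w : Sym2 V → ℝ) (S : Set (Sym2 V)) :
    eweight w S = ∑ e ∈ S.toFinite.toFinset, w e := by
  rw [eweight, ← finsum_mem_coe_finset, Set.Finite.coe_toFinset]

lemma eweight_mono [Fintype V] {w : Sym2 V → ℝ} (hw : ∀ e, 0 ≤ w e)
    {S S' : Set (Sym2 V)} (h : S ⊆ S') : eweight w S ≤ eweight w S' := by
  rw [eweight_eq_sum, eweight_eq_sum]
  refine Finset.sum_le_sum_of_subset_of_nonneg ?_ (fun e _ _ => hw e)
  intro e he
  rw [Set.Finite.mem_toFinset] at he ⊢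
  exact h he

lemma eweight_diff [Fintype V] (w : Sym2 V → ℝ) {S S' : Set (Sym2 V)} (h : S' ⊆ S) :
    eweight w (S \ S') + eweight w S' = eweight w S := by
  rw [eweight_eq_sum, eweight_eq_sum, eweight_eq_sum]
  have h1 : (S \ S').toFinite.toFinset = S.toFinite.toFinset \ S'.toFinite.toFinset := by
    ext e
    rw [Set.Finite.mem_toFinset, Finset.mem_sdiff, Set.Finite.mem_toFinset, Set.Finite.mem_toFinset]
    exact Iff.rfl
  have h2 : S'.toFinite.toFinset ⊆ S.toFinite.toFinset := by
    intro e he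
    rw [Set.Finite.mem_toFinset] at he ⊢
    exact h he
  rw [h1]
  exact Finset.sum_sdiff h2


theorem stmt12 {V : Type} [Fintype V] (G : SimpleGraph V) (hconn : G.Connected)
    (s t : V) (w : Sym2 V → ℝ) (hw : ∀ e, 0 ≤ w e) (hred : Reduced G s t) :
    (∀ T : Set (Sym2 V), T ⊆ G.edgeSet →
      ((IsTrackingEdgeSet G s t T ∧
          ∀ T' : Set (Sym2 V), T' ⊆ G.edgeSet → IsTrackingEdgeSet G s t T' →
            eweight w T ≤ eweight w T') ↔
        (IsFES G T ∧
          ∀ T' : Set (Sym2 V), T' ⊆ G.edgeSet → IsFES G T' →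
            eweight w T ≤ eweight w T'))) ∧
    (∀ H : SimpleGraph V, H ≤ G → H.IsTree →
      (∀ H' : SimpleGraph V, H' ≤ G → H'.IsTree →
        eweight w H'.edgeSet ≤ eweight w H.edgeSet) →
      IsTrackingEdgeSet G s t (G.edgeSet \ H.edgeSet) ∧
        ∀ T' : Set (Sym2 V), T' ⊆ G.edgeSet → IsTrackingEdgeSet G s t T' →
          eweight w (G.edgeSet \ H.edgeSet) ≤ eweight w T') := by
  have key : ∀ T : Set (Sym2 V), IsTrackingEdgeSet G s t T ↔ IsFES G T := by
    intro T
    exact ⟨fun h => acyclic_of_tracking hred h, fun h => tracking_of_acyclic h⟩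
  constructor
  · intro T _
    constructor
    · rintro ⟨h1, h2⟩
      exact ⟨(key T).mp h1, fun T' hs hf => h2 T' hs ((key T').mpr hf)⟩
    · rintro ⟨h1, h2⟩
      exact ⟨(key T).mpr h1, fun T' hs hf => h2 T' hs ((key T').mp hf)⟩
  · intro H hHG hHtree hHmax
    have hdel : G.deleteEdges (G.edgeSet \ H.edgeSet) = H := by
      rw [← edgeSet_inj, edgeSet_deleteEdges]
      ext e
      simp only [Set.mem_diff, not_and, not_not]
      constructor
      · rintro ⟨h1, h2⟩
        exact h2 h1
      · intro h
        exact ⟨edgeSet_mono hHG h, fun _ => h⟩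
    have hFES : IsFES G (G.edgeSet \ H.edgeSet) := by
      rw [IsFES, hdel]
      exact hHtree.2
    refine ⟨(key _).mpr hFES, ?_⟩
    intro T' hT'sub htrT'
    have hT'FES : (G.deleteEdges T').IsAcyclic := acyclic_of_tracking hred htrT'
    obtain ⟨H', hAH', hH'G, hH'tree⟩ :=
      exists_spanning_tree_ge hconn (deleteEdges_le T') hT'FES
    have hcomp : G.edgeSet \ H'.edgeSet ⊆ T' := by
      rintro e ⟨heG, heH'⟩
      by_contra heT'
      have : e ∈ (G.deleteEdges T').edgeSet := by
        rw [edgeSet_deleteEdges]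
        exact ⟨heG, heT'⟩
      exact heH' (edgeSet_mono hAH' this)
    have hH'sub : H'.edgeSet ⊆ G.edgeSet := edgeSet_mono hH'G
    have hHsub : H.edgeSet ⊆ G.edgeSet := edgeSet_mono hHG
    have e1 := eweight_diff w hHsub
    have e2 := eweight_diff w hH'sub
    have e3 : eweight w H'.edgeSet ≤ eweight w H.edgeSet := hHmax H' hH'G hH'tree
    have e4 : eweight w (G.edgeSet \ H'.edgeSet) ≤ eweight w T' := eweight_mono hw hcomp
    linarith
end
end
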